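/- Let Γ = ⟨α, β⟩ with α, β coprime, both odd, and 3 ≤ α < β. Then every selfdual Γ-semimodule Δ has a minimal system of generators of odd cardinality. -/

import Mathlib

/-- The numerical semigroup `⟨α, β⟩ = {pα + qβ : p, q ∈ ℕ}`, viewed inside `ℤ`. -/
def Gamma (α β : ℕ) : Set ℤ := {x : ℤ | ∃ p q : ℕ, x = (p : ℤ) * α + (q : ℤ) * β}

/-- The dual `Δ* = {c ∈ ℤ : c + Δ ⊆ ⟨α,β⟩}` of an `⟨α,β⟩`-semimodule. -/
def dualSet (α β : ℕ) (Δ : Set ℤ) : Set ℤ := {c : ℤ | ∀ x ∈ Δ, c + x ∈ Gamma α β}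

/-- A normalized `⟨α,β⟩`-semimodule: a subset of `ℕ` containing `0`
with `Δ + Γ ⊆ Δ`. -/
def IsNormalizedSemimodule (α β : ℕ) (Δ : Set ℤ) : Prop :=
  (0 : ℤ) ∈ Δ ∧ (∀ x ∈ Δ, 0 ≤ x) ∧ ∀ x ∈ Δ, ∀ γ ∈ Gamma α β, x + γ ∈ Δ

/-- `Δ` is selfdual if `Δ*` is a shift of `Δ`. -/
def IsSelfdual (α β : ℕ) (Δ : Set ℤ) : Prop :=
  ∃ c : ℤ, dualSet α β Δ = (fun x => c + x) '' Δ

/-- `E` is the minimal system of generators of `Δ`: it generates `Δ`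
(`⋃_{x∈E}(x+Γ) = Δ`) and no proper subset of it generates `Δ`. -/
def IsMinGenSet (α β : ℕ) (Δ : Set ℤ) (E : Finset ℤ) : Prop :=
  (↑E ⊆ Δ) ∧ (⋃ x ∈ (E : Set ℤ), (fun γ => x + γ) '' Gamma α β) = Δ ∧
    ∀ F : Finset ℤ, F ⊂ E → (⋃ x ∈ (F : Set ℤ), (fun γ => x + γ) '' Gamma α β) ≠ Δ

section lemmas
variable {α β : ℕ}
lemma gamma_zero : (0:ℤ) ∈ Gamma α β := ⟨0, 0, by simp⟩
lemma gamma_beta : (β:ℤ) ∈ Gamma α β := ⟨0, 1, by simp⟩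
lemma gamma_add {x y : ℤ} (hx : x ∈ Gamma α β) (hy : y ∈ Gamma α β) : x + y ∈ Gamma α β := by
  obtain ⟨p, q, rfl⟩ := hx; obtain ⟨p', q', rfl⟩ := hy
  exact ⟨p + p', q + q', by push_cast; ring⟩
lemma gamma_nonneg {x : ℤ} (hx : x ∈ Gamma α β) : 0 ≤ x := by
  obtain ⟨p, q, rfl⟩ := hx; positivity
lemma gamma_step {x : ℤ} (hx : x ∈ Gamma α β) (hne : x ≠ 0) :
    x - α ∈ Gamma α β ∨ x - β ∈ Gamma α β := by
  obtain ⟨p, q, rfl⟩ := hx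
  rcases Nat.eq_zero_or_pos p with hp | hp
  · rcases Nat.eq_zero_or_pos q with hq | hq
    · exfalso; apply hne; simp [hp, hq]
    · right; exact ⟨p, q - 1, by push_cast [Nat.cast_sub hq]; ring⟩
  · left; exact ⟨p - 1, q, by push_cast [Nat.cast_sub hp]; ring⟩

variable (hα : 0 < α) (hβ : 0 < β) (hcop : Nat.Coprime α β)
include hα hβ hcop
lemma gamma_sym (z : ℤ) :
    z ∈ Gamma α β ↔ ((α:ℤ) * β - α - β - z) ∉ Gamma α β := by
  have hcopZ : IsCoprime (α:ℤ) (β:ℤ) := by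
    rw [Int.isCoprime_iff_gcd_eq_one]; exact_mod_cast hcop
  obtain ⟨a, b, hab⟩ := id hcopZ
  have hαZ : (0:ℤ) < α := by exact_mod_cast hα
  have hβZ : (0:ℤ) < β := by exact_mod_cast hβ
  set Q : ℤ → ℤ := fun w => (b * w) % α with hQ
  have hQnn : ∀ w, 0 ≤ Q w := fun w => Int.emod_nonneg _ (by omega)
  have hQlt : ∀ w, Q w < α := fun w => Int.emod_lt_of_pos _ hαZ
  have hQdvd : ∀ w, (α:ℤ) ∣ Q w * β - w := by
    intro w
    have h1 : (α:ℤ) ∣ b * w - Q w := Int.dvd_self_sub_of_emod_eq rfl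
    obtain ⟨u, hu⟩ := h1
    exact ⟨-u * β - a * w, by linear_combination w * hab - β * hu⟩
  have hQuniq : ∀ w x : ℤ, 0 ≤ x → x < α → (α:ℤ) ∣ x * β - w → x = Q w := by
    intro w x hx0 hxα hdvd
    have hd : (α:ℤ) ∣ (x - Q w) * β := by
      obtain ⟨u, hu⟩ := hdvd; obtain ⟨v, hv⟩ := hQdvd w
      exact ⟨u - v, by linear_combination hu - hv⟩
    have hd2 : (α:ℤ) ∣ x - Q w := hcopZ.dvd_of_dvd_mul_right hd
    obtain ⟨u, hu⟩ := hd2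
    have := hQnn w; have := hQlt w
    rcases lt_trichotomy u 0 with h | h | h
    · nlinarith
    · rw [h, mul_zero] at hu; omega
    · nlinarith
  have hmem : ∀ w : ℤ, w ∈ Gamma α β ↔ Q w * β ≤ w := by
    intro w
    constructor
    · rintro ⟨p, q, rfl⟩
      have hd : (α:ℤ) ∣ (Q ((p:ℤ)*α+q*β) - q) * β := by
        obtain ⟨u, hu⟩ := hQdvd ((p:ℤ)*α + q*β)
        exact ⟨u + p, by linear_combination hu⟩
      have hd2 : (α:ℤ) ∣ Q ((p:ℤ)*α+(q:ℤ)*β) - q := hcopZ.dvd_of_dvd_mul_right hd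
      have hqnn : (0:ℤ) ≤ q := by positivity
      have hQb := hQnn ((p:ℤ)*α+q*β); have hQl := hQlt ((p:ℤ)*α+q*β)
      have hge : Q ((p:ℤ)*α+(q:ℤ)*β) ≤ q := by
        rcases hd2 with ⟨u, hu⟩
        rcases le_or_gt u 0 with h | h
        · nlinarith
        · nlinarith
      nlinarith [mul_nonneg (Int.natCast_nonneg p) (le_of_lt hαZ)]
    · intro h
      obtain ⟨u, hu⟩ := hQdvd w
      have hu0 : u ≤ 0 := by nlinarith
      refine ⟨(-u).toNat, (Q w).toNat, ?_⟩
      rw [Int.toNat_of_nonneg (by omega), Int.toNat_of_nonneg (hQnn w)]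
      linarith [hu]
  have key : Q ((α:ℤ)*β - α - β - z) = α - 1 - Q z := by
    refine (hQuniq _ _ (by have := hQlt z; omega) (by have := hQnn z; omega) ?_).symm
    obtain ⟨u, hu⟩ := hQdvd z
    exact ⟨1 - u, by linear_combination -hu⟩
  rw [hmem z, hmem _, key]
  obtain ⟨u, hu⟩ := hQdvd z
  constructor
  · intro h h2
    nlinarith
  · intro h
    by_contra h2
    push_neg at h2
    have h3 : (0:ℤ) < Q z * β - z := by linarith
    have h4 : (α:ℤ) ≤ Q z * β - z := Int.le_of_dvd h3 ⟨u, hu⟩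
    nlinarith
end lemmas

/-- If `α` and `β` are both odd, any selfdual semimodule is minimally generated
by an odd number of elements. -/
theorem selfdual_odd_generators (α β : ℕ)
    (hα : 3 ≤ α) (hαβ : α < β) (hcop : Nat.Coprime α β)
    (hαodd : Odd α) (hβodd : Odd β)
    (Δ : Set ℤ) (hΔ : IsNormalizedSemimodule α β Δ) (hsd : IsSelfdual α β Δ)
    (E : Finset ℤ) (hE : IsMinGenSet α β Δ E) :
    Odd E.card := by
  classical
  obtain ⟨h0Δ, hΔnn, hΔcl⟩ := hΔ
  obtain ⟨hEsub, hEgen, hEmin⟩ := hE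
  haveI : NeZero α := ⟨by omega⟩
  have hα0 : 0 < α := by omega
  have hβ0 : 0 < β := by omega
  have hαZ : (0:ℤ) < α := by exact_mod_cast hα0
  have hβZ : (0:ℤ) < β := by exact_mod_cast hβ0
  set F : ℤ := (α:ℤ) * β - α - β with hF
  have hsym : ∀ z : ℤ, z ∈ Gamma α β ↔ (F - z) ∉ Gamma α β :=
    fun z => gamma_sym hα0 hβ0 hcop z
  -- cast criterion
  have hcast : ∀ x y : ℤ, ((x : ZMod α) = (y : ZMod α)) ↔ (α:ℤ) ∣ y - x := by
    intro x y
    rw [ZMod.intCast_eq_intCast_iff]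
    exact Int.modEq_iff_dvd
  -- membership via generation (from hEgen)
  have hEmem : ∀ z : ℤ, z ∈ Δ ↔ ∃ x ∈ E, ∃ γ ∈ Gamma α β, x + γ = z := by
    intro z
    conv_lhs => rw [← hEgen]
    simp only [Set.mem_iUnion, Set.mem_image, Finset.mem_coe]
    constructor
    · rintro ⟨x, hx, γ, hγ, hxγ⟩
      exact ⟨x, hx, γ, hγ, hxγ⟩
    · rintro ⟨x, hx, γ, hγ, hxγ⟩
      exact ⟨x, hx, γ, hγ, hxγ⟩
  -- every residue class meets Δ
  have hcover : ∀ r : ZMod α, ∃ z, z ∈ Δ ∧ (z : ZMod α) = r := by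
    intro r
    have hβu : IsUnit (β : ZMod α) := by
      rw [ZMod.isUnit_iff_coprime]
      exact hcop.symm
    obtain ⟨u, hu⟩ := hβu
    refine ⟨((r * ↑u⁻¹).val : ℕ) * (β:ℤ), ?_, ?_⟩
    · have := hΔcl 0 h0Δ _ (⟨0, (r * ↑u⁻¹).val, by push_cast; ring⟩ : ((((r * ↑u⁻¹).val:ℕ):ℤ) * (β:ℤ)) ∈ Gamma α β)
      simpa using this
    · push_cast
      rw [ZMod.natCast_val, ZMod.cast_id, ← hu, mul_assoc, Units.inv_mul, mul_one]
  -- minimal elements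
  have hminex : ∀ r : ZMod α, ∃ mr : ℤ,
      (mr ∈ Δ ∧ ((mr : ZMod α) = r)) ∧ ∀ z, (z ∈ Δ ∧ (z:ZMod α) = r) → mr ≤ z := by
    intro r
    obtain ⟨z0, hz0, hz0r⟩ := hcover r
    exact Int.exists_least_of_bdd ⟨0, fun z hz => hΔnn z hz.1⟩ ⟨z0, hz0, hz0r⟩
  choose m hm hmmin using hminex
  have hmΔ : ∀ r, m r ∈ Δ := fun r => (hm r).1
  have hmr : ∀ r, ((m r : ℤ) : ZMod α) = r := fun r => (hm r).2
  have hmemΔ : ∀ z : ℤ, z ∈ Δ ↔ m ((z:ℤ) : ZMod α) ≤ z := by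
    intro z
    constructor
    · intro hz; exact hmmin _ z ⟨hz, rfl⟩
    · intro hz
      have hdvd : (α:ℤ) ∣ z - m ((z:ℤ) : ZMod α) := (hcast _ _).mp (hmr _)
      obtain ⟨k, hk⟩ := hdvd
      have hk0 : 0 ≤ k := by nlinarith
      have hγ : z - m ((z:ℤ) : ZMod α) ∈ Gamma α β :=
        ⟨k.toNat, 0, by rw [Int.toNat_of_nonneg hk0]; push_cast; linarith⟩
      have := hΔcl (m ((z:ℤ) : ZMod α)) (hmΔ _) _ hγ
      simpa using this
  -- selfduality gives a symmetry x ∈ Δ ↔ d - x ∉ Δ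
  obtain ⟨c, hc⟩ := hsd
  have hdualiff : ∀ y : ℤ, y ∈ dualSet α β Δ ↔ F - y ∉ Δ := by
    intro y
    constructor
    · intro hy hFy
      have h0 : y + (F - y) ∈ Gamma α β := hy _ hFy
      have : F ∈ Gamma α β := by simpa using h0
      exact ((hsym F).mp this) (by simpa using (gamma_zero : (0:ℤ) ∈ Gamma α β))
    · intro hFy x hx
      rw [hsym]
      intro hmem2
      have h5 : x + (F - (y + x)) ∈ Δ := hΔcl x hx _ hmem2
      exact hFy (by rw [show F - y = x + (F - (y + x)) by ring]; exact h5)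
  set d : ℤ := F - c with hd
  have hΔsym : ∀ x : ℤ, x ∈ Δ ↔ d - x ∉ Δ := by
    intro x
    have h1 : x ∈ Δ ↔ c + x ∈ dualSet α β Δ := by
      rw [hc]
      constructor
      · intro h; exact ⟨x, h, rfl⟩
      · rintro ⟨w, hw, hwx⟩
        have : w = x := by dsimp at hwx; linarith
        rwa [← this]
    rw [h1, hdualiff, show F - (c + x) = d - x by rw [hd]; ring]
  -- duality for minimal elements
  have hmd : ∀ r : ZMod α, m r + m ((d : ZMod α) - r) = d + α := by
    intro r
    set s : ZMod α := (d : ZMod α) - r with hs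
    have h1 : d - m r ∉ Δ := (hΔsym (m r)).mp (hmΔ r)
    rw [hmemΔ] at h1
    push_neg at h1
    have hcs : ((d - m r : ℤ) : ZMod α) = s := by
      push_cast [hmr r]
      ring
    rw [hcs] at h1
    -- h1 : d - m r < m s ; with congruence, m s ≥ d - m r + α
    have hdv1 : (α:ℤ) ∣ m s - (d - m r) := by
      rw [← hcast]
      rw [hcs, hmr]
    have hge : d - m r + α ≤ m s := by
      obtain ⟨k, hk⟩ := hdv1
      have : 0 < k := by nlinarith
      nlinarith
    -- other direction
    have h2 : m s - α ∉ Δ := by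
      rw [hmemΔ]
      push_neg
      have : ((m s - α : ℤ) : ZMod α) = s := by push_cast [hmr s]; simp
      rw [this]
      linarith
    have h3 : d - (m s - α) ∈ Δ := by
      by_contra h4
      exact h2 ((hΔsym (m s - α)).mpr h4)
    have h5 : m ((d - (m s - α) : ℤ) : ZMod α) ≤ d - (m s - α) := (hmemΔ _).mp h3
    have hcr : ((d - (m s - α) : ℤ) : ZMod α) = r := by
      push_cast [hmr s, hs]
      ring_nf
      simp
      rw [hmr]; ring
    rw [hcr] at h5
    linarith
  -- generator predicate
  have hstepβ : ∀ r : ZMod α, m r ≤ m (r - (β:ZMod α)) + β := by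
    intro r
    apply hmmin
    constructor
    · exact hΔcl _ (hmΔ _) _ gamma_beta
    · push_cast [hmr]
      ring
  have hgen : ∀ r : ZMod α, (m r - β ∈ Δ) ↔ m r = m (r - (β:ZMod α)) + β := by
    intro r
    rw [hmemΔ]
    have hcb : ((m r - β : ℤ) : ZMod α) = r - (β:ZMod α) := by push_cast [hmr]; ring
    rw [hcb]
    constructor
    · intro h
      have := hstepβ r
      omega
    · intro h
      omega
  set G : Finset (ZMod α) :=
    Finset.univ.filter (fun r => m r ≠ m (r - (β:ZMod α)) + β) with hG
  have hGmem : ∀ r : ZMod α, r ∈ G ↔ m r - β ∉ Δ := by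
    intro r
    simp only [hG, Finset.mem_filter, Finset.mem_univ, true_and]
    rw [hgen]
  -- E = G.image m
  have hmα : ∀ r : ZMod α, ∀ z : ℤ, z ∈ Δ → (z : ZMod α) = r → z ≠ m r → m r + α ≤ z := by
    intro r z hz hzr hne
    have h1 : m r ≤ z := hmmin r z ⟨hz, hzr⟩
    have h2 : (α:ℤ) ∣ z - m r := by
      rw [← hcast, hmr, hzr]
    obtain ⟨k, hk⟩ := h2
    have : 0 < k := by
      rcases lt_trichotomy k 0 with h | h | h
      · nlinarith
      · apply absurd hne; push_neg; rw [h, mul_zero] at hk; omega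
      · exact h
    nlinarith
  have hEeq : E = G.image m := by
    ext x
    simp only [Finset.mem_image]
    constructor
    · intro hxE
      have hxΔ : x ∈ Δ := hEsub hxE
      set r : ZMod α := (x : ZMod α) with hr
      refine ⟨r, ?_, ?_⟩
      all_goals {
        by_contra hcon
        -- in either failure case, x - α ∈ Δ or x - β ∈ Δ
        have hkey : ∃ δ : ℤ, δ ∈ Gamma α β ∧ 0 < δ ∧ x - δ ∈ Δ := by
          by_cases hxm : x = m r
          · -- then r ∉ G fails means m r - β ∈ Δ
            have hrG : r ∉ G := by
              intro hrg
              apply hcon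
              first
              | exact hrg
              | (exact hxm.symm)
            rw [hGmem] at hrG
            push_neg at hrG
            refine ⟨(β:ℤ), gamma_beta, hβZ, ?_⟩
            rw [hxm]
            exact hrG
          · have := hmα r x hxΔ rfl hxm
            refine ⟨(α:ℤ), ⟨1, 0, by push_cast; ring⟩, hαZ, ?_⟩
            rw [hmemΔ]
            have hcx : ((x - α : ℤ) : ZMod α) = r := by push_cast; simp [hr]
            rw [hcx]
            omega
        -- contradiction with minimality of E
        obtain ⟨δ, hδΓ, hδpos, hxδ⟩ := hkey
        obtain ⟨y, hyE, γ, hγΓ, hyγ⟩ := (hEmem _).mp hxδ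
        have hyne : y ≠ x := by
          have := gamma_nonneg hγΓ
          omega
        apply hEmin (E.erase x) (Finset.erase_ssubset hxE)
        rw [← hEgen]
        ext z
        simp only [Set.mem_iUnion, Set.mem_image, Finset.coe_erase, Set.mem_diff,
          Finset.mem_coe, Set.mem_singleton_iff]
        constructor
        · rintro ⟨w, ⟨hwE, -⟩, γ', hγ', hwγ⟩
          exact ⟨w, hwE, γ', hγ', hwγ⟩
        · rintro ⟨w, hwE, γ', hγ', hwγ⟩
          by_cases hwx : w = x
          · refine ⟨y, ⟨hyE, hyne⟩, γ + δ + γ', gamma_add (gamma_add hγΓ hδΓ) hγ', ?_⟩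
            have hwγ' : w + γ' = z := hwγ
            show y + (γ + δ + γ') = z
            omega
          · exact ⟨w, ⟨hwE, hwx⟩, γ', hγ', hwγ⟩
      }
    · rintro ⟨r, hrG, rfl⟩
      -- m r must be in E
      obtain ⟨y, hyE, γ, hγΓ, hyγ⟩ := (hEmem (m r)).mp (hmΔ r)
      rcases eq_or_ne γ 0 with h0 | h0
      · rw [h0, add_zero] at hyγ
        rwa [← hyγ]
      · exfalso
        rcases gamma_step hγΓ h0 with h | h
        · -- m r - α ∈ Δ : impossible
          have h1 : m r - α ∈ Δ := by
            have := hΔcl y (hEsub hyE) _ h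
            rw [show y + (γ - α) = m r - α by omega] at this
            exact this
          rw [hmemΔ] at h1
          have hcx : ((m r - α : ℤ) : ZMod α) = r := by push_cast [hmr]; simp
          rw [hcx] at h1
          omega
        · have h1 : m r - β ∈ Δ := by
            have := hΔcl y (hEsub hyE) _ h
            rw [show y + (γ - β) = m r - β by omega] at this
            exact this
          rw [hGmem] at hrG
          exact hrG h1
  -- cardinality
  have hEcard : E.card = G.card := by
    rw [hEeq]
    apply Finset.card_image_of_injOn
    intro r hr r' hr' hmm
    rw [← hmr r, ← hmr r', hmm]
  rw [hEcard]
  -- parity argument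
  obtain ⟨t, ht⟩ := hαodd
  obtain ⟨u, hu⟩ := hβodd
  have hαcast : (α:ℤ) = 2*t+1 := by exact_mod_cast ht
  have hβcast : (β:ℤ) = 2*u+1 := by exact_mod_cast hu
  set i2 : ZMod α := ((t+1 : ℕ) : ZMod α) with hi2
  have h2inv : (2 : ZMod α) * i2 = 1 := by
    have h : ((2*t+1 : ℕ) : ZMod α) = 0 := by rw [← ht]; exact ZMod.natCast_self α
    rw [hi2]
    push_cast at h ⊢
    linear_combination h
  set e : ZMod α := (d : ZMod α) + (β : ZMod α) with he
  set r₁ : ZMod α := i2 * e with hr₁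
  set r₀ : ZMod α := i2 * (d : ZMod α) with hr₀
  have hfix1 : e - r₁ = r₁ := by
    rw [hr₁]; linear_combination (-e) * h2inv
  have hfix0 : (d : ZMod α) - r₀ = r₀ := by
    rw [hr₀]; linear_combination (-(d:ZMod α)) * h2inv
  have hfixuniq : ∀ r : ZMod α, e - r = r → r = r₁ := by
    intro r h
    rw [hr₁]
    linear_combination (-r) * h2inv + (-i2) * h
  -- d is odd
  have hd0 : 2 * m r₀ = d + α := by
    have h := hmd r₀
    rw [hfix0] at h
    omega
  -- involution preserves G
  have hm1 : ∀ r : ZMod α, m (e - r) = d + α - m (r - (β:ZMod α)) := by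
    intro r
    have h := hmd (r - (β:ZMod α))
    rw [show (d:ZMod α) - (r - (β:ZMod α)) = e - r by rw [he]; ring] at h
    omega
  have hm2 : ∀ r : ZMod α, m (e - r - (β:ZMod α)) = d + α - m r := by
    intro r
    have h := hmd r
    rw [show (d:ZMod α) - r = e - r - (β:ZMod α) by rw [he]; ring] at h
    omega
  have hGτ : ∀ r : ZMod α, e - r ∈ G ↔ r ∈ G := by
    intro r
    simp only [hG, Finset.mem_filter, Finset.mem_univ, true_and]
    rw [hm1, hm2]
    omega
  -- r₁ is a generator
  have hr₁G : r₁ ∈ G := by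
    by_contra hcon
    simp only [hG, Finset.mem_filter, Finset.mem_univ, true_and, not_not] at hcon
    have h := hmd (r₁ - (β:ZMod α))
    rw [show (d:ZMod α) - (r₁ - (β:ZMod α)) = e - r₁ by rw [he]; ring, hfix1] at h
    omega
  -- the erase of r₁ has even cardinality
  set S : Finset (ZMod α) := G.erase r₁ with hS
  have hSmem : ∀ a : ZMod α, a ∈ S → e - a ∈ S := by
    intro a ha
    rw [hS, Finset.mem_erase] at ha ⊢
    refine ⟨?_, (hGτ a).mpr ha.2⟩
    intro hcon
    apply ha.1
    have : a = e - r₁ := by rw [← hcon]; ring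
    rw [this, hfix1]
  have hsum : ∑ _x ∈ S, (1 : ZMod 2) = 0 := by
    apply Finset.sum_involution (fun a _ => e - a)
    · intro a ha; decide
    · intro a ha hne
      intro hcon
      have : a = r₁ := hfixuniq a hcon
      rw [hS, Finset.mem_erase] at ha
      exact ha.1 this
    · intro a ha; exact hSmem a ha
    · intro a ha; ring
  have hScard : (S.card : ZMod 2) = 0 := by
    rw [Finset.sum_const] at hsum
    simpa using hsum
  have hSeven : 2 ∣ S.card := by
    rwa [ZMod.natCast_eq_zero_iff] at hScard
  have hcards : S.card = G.card - 1 := Finset.card_erase_of_mem hr₁G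
  have hGpos : 0 < G.card := Finset.card_pos.mpr ⟨r₁, hr₁G⟩
  obtain ⟨k, hk⟩ := hSeven
  exact ⟨k, by omega⟩
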